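/- Sequential derandomization with averaging (existence form): Let m, n ∈ ℕ, M ≥ max(m,2), A ∈ ℝ^{m×n}, and imp ∈ ℝ_{≥0}^m. There exists a vector χ ∈ {-1,1}ⁿ such that (1) Σ_{i=1}^m impᵢ·(Σ_{j=1}^n aᵢⱼχⱼ)² ≤ (1 + 1/M)·Σ_{i=1}^m impᵢ·(Σ_{j=1}^n aᵢⱼ²), and (2) for every i ∈ [m], (Σ_{j=1}^n aᵢⱼχⱼ)² ≤ C·log(M)·Σ_{j=1}^n aᵢⱼ², for an absolute constant C > 0. -/

import Mathlib

noncomputable def sgn1 (b : Bool) : ℝ := if b then 1 else -1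

lemma sum_prod_bool {n : ℕ} (g : Fin n → Bool → ℝ) :
    ∑ f : Fin n → Bool, ∏ j, g j (f j) = ∏ j, (g j true + g j false) := by
  rw [← Fintype.prod_sum g]
  exact Finset.prod_congr rfl fun j _ => by simp

lemma sum_sg_cross {n : ℕ} {j k : Fin n} (hjk : j ≠ k) :
    ∑ f : Fin n → Bool, sgn1 (f j) * sgn1 (f k) = 0 := by
  have hrepr : ∀ f : Fin n → Bool,
      sgn1 (f j) * sgn1 (f k)
        = ∏ l, ((if l = j then sgn1 (f l) else 1) * (if l = k then sgn1 (f l) else 1)) := by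
    intro f
    rw [Finset.prod_mul_distrib]
    simp
  rw [Finset.sum_congr rfl fun f _ => hrepr f,
    sum_prod_bool (fun l b => (if l = j then sgn1 b else 1) * (if l = k then sgn1 b else 1))]
  refine Finset.prod_eq_zero (Finset.mem_univ j) ?_
  simp [sgn1, hjk]

lemma sum_sg_diag {n : ℕ} (j : Fin n) :
    ∑ f : Fin n → Bool, sgn1 (f j) * sgn1 (f j) = 2 ^ n := by
  have h1 : ∀ f : Fin n → Bool, sgn1 (f j) * sgn1 (f j) = 1 := by
    intro f; cases h : f j <;> simp [sgn1, h]
  rw [Finset.sum_congr rfl fun f _ => h1 f]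
  simp [Finset.card_univ]

lemma sum_sq_disc {n : ℕ} (a : Fin n → ℝ) :
    ∑ f : Fin n → Bool, (∑ j, a j * sgn1 (f j)) ^ 2 = 2 ^ n * ∑ j, (a j) ^ 2 := by
  have expand : ∀ f : Fin n → Bool,
      (∑ j, a j * sgn1 (f j)) ^ 2
        = ∑ j, ∑ k, a j * a k * (sgn1 (f j) * sgn1 (f k)) := by
    intro f
    rw [sq, Finset.sum_mul_sum]
    exact Finset.sum_congr rfl fun j _ => Finset.sum_congr rfl fun k _ => by ring
  calc ∑ f : Fin n → Bool, (∑ j, a j * sgn1 (f j)) ^ 2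
      = ∑ f : Fin n → Bool, ∑ j, ∑ k, a j * a k * (sgn1 (f j) * sgn1 (f k)) :=
        Finset.sum_congr rfl fun f _ => expand f
    _ = ∑ j, ∑ f : Fin n → Bool, ∑ k, a j * a k * (sgn1 (f j) * sgn1 (f k)) :=
        Finset.sum_comm
    _ = ∑ j, ∑ k, ∑ f : Fin n → Bool, a j * a k * (sgn1 (f j) * sgn1 (f k)) :=
        Finset.sum_congr rfl fun j _ => Finset.sum_comm
    _ = ∑ j, ∑ k, a j * a k * ∑ f : Fin n → Bool, sgn1 (f j) * sgn1 (f k) := by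
        simp_rw [← Finset.mul_sum]
    _ = ∑ j, a j * a j * 2 ^ n := by
        refine Finset.sum_congr rfl fun j _ => ?_
        rw [Finset.sum_eq_single j]
        · rw [sum_sg_diag]
        · intro k _ hkj
          rw [sum_sg_cross (Ne.symm hkj), mul_zero]
        · intro h; exact absurd (Finset.mem_univ j) h
    _ = 2 ^ n * ∑ j, (a j) ^ 2 := by
        rw [Finset.mul_sum]
        exact Finset.sum_congr rfl fun j _ => by ring

lemma sum_exp_le {n : ℕ} (a : Fin n → ℝ) (t : ℝ) :
    ∑ f : Fin n → Bool, Real.exp (t * ∑ j, a j * sgn1 (f j))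
      ≤ 2 ^ n * Real.exp (t ^ 2 * (∑ j, (a j) ^ 2) / 2) := by
  have hexp : ∀ f : Fin n → Bool,
      Real.exp (t * ∑ j, a j * sgn1 (f j)) = ∏ j, Real.exp (t * a j * sgn1 (f j)) := by
    intro f
    rw [Finset.mul_sum, Real.exp_sum]
    exact Finset.prod_congr rfl fun j _ => by rw [mul_assoc]
  rw [Finset.sum_congr rfl fun f _ => hexp f,
    sum_prod_bool (fun j b => Real.exp (t * a j * sgn1 b))]
  have hfac : ∀ j, Real.exp (t * a j * sgn1 true) + Real.exp (t * a j * sgn1 false)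
      ≤ 2 * Real.exp ((t * a j) ^ 2 / 2) := by
    intro j
    have h := Real.cosh_le_exp_half_sq (t * a j)
    rw [Real.cosh_eq] at h
    have e1 : sgn1 true = 1 := rfl
    have e2 : sgn1 false = -1 := rfl
    rw [e1, e2, mul_one, show t * a j * (-1) = -(t * a j) by ring]
    linarith
  calc ∏ j, (Real.exp (t * a j * sgn1 true) + Real.exp (t * a j * sgn1 false))
      ≤ ∏ j, 2 * Real.exp ((t * a j) ^ 2 / 2) :=
        Finset.prod_le_prod (fun j _ => by positivity) (fun j _ => hfac j)
    _ = 2 ^ n * Real.exp (t ^ 2 * (∑ j, (a j) ^ 2) / 2) := by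
        rw [Finset.prod_mul_distrib, Finset.prod_const, ← Real.exp_sum]
        simp only [Finset.card_univ, Fintype.card_fin]
        congr 1
        rw [← Finset.sum_div, Finset.mul_sum]
        exact congrArg Real.exp (congrArg (· / 2) (Finset.sum_congr rfl fun j _ => by ring))

lemma markov_count {α : Type*} (s B : Finset α) (X : α → ℝ) (a : ℝ)
    (hX : ∀ f ∈ s, 0 ≤ X f) (hB : B ⊆ s) (hBa : ∀ f ∈ B, a ≤ X f) :
    a * B.card ≤ ∑ f ∈ s, X f := by
  calc a * B.card = ∑ _f ∈ B, a := by rw [Finset.sum_const, nsmul_eq_mul, mul_comm]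
    _ ≤ ∑ f ∈ B, X f := Finset.sum_le_sum hBa
    _ ≤ ∑ f ∈ s, X f := Finset.sum_le_sum_of_subset_of_nonneg hB fun f hf _ => hX f hf

/-- Sequential derandomization with importance-weighted averaging (existence form). -/
theorem sequential_derandomization_with_averaging :
    ∃ C : ℝ, 0 < C ∧
      ∀ (m n : ℕ) (M : ℝ), (m : ℝ) ≤ M → 2 ≤ M →
        ∀ (A : Fin m → Fin n → ℝ) (imp : Fin m → ℝ), (∀ i, 0 ≤ imp i) →
          ∃ χ : Fin n → ℝ, (∀ j, χ j = 1 ∨ χ j = -1) ∧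
            (∑ i, imp i * (∑ j, A i j * χ j) ^ 2
              ≤ (1 + 1 / M) * ∑ i, imp i * ∑ j, (A i j) ^ 2) ∧
            ∀ i : Fin m,
              (∑ j, A i j * χ j) ^ 2 ≤ C * Real.log M * ∑ j, (A i j) ^ 2 := by
  classical
  refine ⟨12, by norm_num, ?_⟩
  intro m n M hmM h2M A imp himp
  have hM0 : (0:ℝ) < M := by linarith
  have hM1 : (1:ℝ) < M := by linarith
  have hMne : M ≠ 0 := ne_of_gt hM0
  have hMp1 : (0:ℝ) < M + 1 := by linarith
  have hL : 0 < Real.log M := Real.log_pos hM1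
  set L := Real.log M with hLdef
  set S : Fin m → (Fin n → Bool) → ℝ := fun i f => ∑ j, A i j * sgn1 (f j) with hS
  set v : Fin m → ℝ := fun i => ∑ j, (A i j) ^ 2 with hv
  set μ : ℝ := ∑ i, imp i * v i with hμ
  have hvnn : ∀ i, 0 ≤ v i := fun i => Finset.sum_nonneg fun j _ => sq_nonneg _
  have hμnn : 0 ≤ μ := Finset.sum_nonneg fun i _ => mul_nonneg (himp i) (hvnn i)
  set X : (Fin n → Bool) → ℝ := fun f => ∑ i, imp i * (S i f) ^ 2 with hX
  have hXnn : ∀ f, 0 ≤ X f :=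
    fun f => Finset.sum_nonneg fun i _ => mul_nonneg (himp i) (sq_nonneg _)
  set P : (Fin n → Bool) → Prop :=
    fun f => (X f ≤ (1 + 1 / M) * μ) ∧ ∀ i, (S i f) ^ 2 ≤ 12 * L * v i with hP
  suffices hns : (Finset.univ.filter P).Nonempty by
    obtain ⟨f, hf⟩ := hns
    have hPf : P f := (Finset.mem_filter.mp hf).2
    refine ⟨fun j => sgn1 (f j), fun j => ?_, hPf.1, hPf.2⟩
    cases h : f j
    · right; simp [sgn1, h]
    · left; simp [sgn1, h]
  have hEX : ∑ f : Fin n → Bool, X f = 2 ^ n * μ := by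
    simp only [hX, hμ, hS, hv]
    rw [Finset.sum_comm, Finset.mul_sum]
    refine Finset.sum_congr rfl fun i _ => ?_
    rw [← Finset.mul_sum, sum_sq_disc (fun j => A i j)]
    ring
  set B0 : Finset (Fin n → Bool) := Finset.univ.filter (fun f => (1 + 1 / M) * μ < X f)
    with hB0def
  set Bi : Fin m → Finset (Fin n → Bool) :=
    fun i => Finset.univ.filter (fun f => 12 * L * v i < (S i f) ^ 2) with hBidef
  have hsubset : Finset.univ.filter (fun f => ¬ P f) ⊆ B0 ∪ Finset.univ.biUnion Bi := by
    intro f hf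
    have hnp : ¬ P f := (Finset.mem_filter.mp hf).2
    rw [Finset.mem_union]
    by_cases hc : X f ≤ (1 + 1 / M) * μ
    · right
      have h2 : ¬ ∀ i, (S i f) ^ 2 ≤ 12 * L * v i := fun h => hnp ⟨hc, h⟩
      push_neg at h2
      obtain ⟨i, hi⟩ := h2
      refine Finset.mem_biUnion.mpr ⟨i, Finset.mem_univ i, ?_⟩
      rw [hBidef]
      exact Finset.mem_filter.mpr ⟨Finset.mem_univ f, hi⟩
    · left
      rw [hB0def]
      exact Finset.mem_filter.mpr ⟨Finset.mem_univ f, not_le.mp hc⟩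
  have hB0 : (B0.card : ℝ) ≤ 2 ^ n * (M / (M + 1)) := by
    rcases eq_or_lt_of_le hμnn with hz | hpos
    · have hzero : ∀ f ∈ (Finset.univ : Finset (Fin n → Bool)), X f = 0 := by
        rw [← Finset.sum_eq_zero_iff_of_nonneg (fun f _ => hXnn f)]
        rw [hEX, ← hz, mul_zero]
      have hBe : B0 = ∅ := by
        refine Finset.eq_empty_iff_forall_notMem.mpr fun f hf => ?_
        have hlt : (1 + 1 / M) * μ < X f := by
          rw [hB0def] at hf; exact (Finset.mem_filter.mp hf).2
        rw [hzero f (Finset.mem_univ f), ← hz, mul_zero] at hlt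
        exact lt_irrefl 0 hlt
      rw [hBe]
      simp only [Finset.card_empty, Nat.cast_zero]
      positivity
    · have hmark := markov_count Finset.univ B0 X ((1 + 1 / M) * μ)
        (fun f _ => hXnn f) (by rw [hB0def]; exact Finset.filter_subset _ _)
        (fun f hf => le_of_lt (by rw [hB0def] at hf; exact (Finset.mem_filter.mp hf).2))
      rw [hEX] at hmark
      have hfacpos : (0:ℝ) < (1 + 1 / M) * μ := by positivity
      have h1 : ((B0.card : ℝ)) * ((1 + 1 / M) * μ)
          ≤ (2 ^ n * (M / (M + 1))) * ((1 + 1 / M) * μ) := by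
        have e : (2 ^ n * (M / (M + 1))) * ((1 + 1 / M) * μ) = 2 ^ n * μ := by
          field_simp
        rw [e]
        linarith [hmark]
      exact le_of_mul_le_mul_right h1 hfacpos
  have hBi : ∀ i, ((Bi i).card : ℝ) ≤ 2 * 2 ^ n / M ^ 6 := by
    intro i
    by_cases hvi : v i = 0
    · have hAz : ∀ j, A i j = 0 := by
        intro j
        have hvi' : ∑ j, (A i j) ^ 2 = 0 := by rw [← hvi]
        have h0 := (Finset.sum_eq_zero_iff_of_nonneg
          (fun j (_ : j ∈ Finset.univ) => sq_nonneg (A i j))).mp hvi' j (Finset.mem_univ j)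
        exact pow_eq_zero_iff (n := 2) (by norm_num) |>.mp h0
      have hBe : Bi i = ∅ := by
        refine Finset.eq_empty_iff_forall_notMem.mpr fun f hf => ?_
        have hlt : 12 * L * v i < (S i f) ^ 2 := by
          rw [hBidef] at hf; exact (Finset.mem_filter.mp hf).2
        have hS0 : S i f = 0 := by
          rw [hS]
          exact Finset.sum_eq_zero fun j _ => by rw [hAz j, zero_mul]
        rw [hS0, hvi, mul_zero] at hlt
        simp at hlt
      rw [hBe]
      simp only [Finset.card_empty, Nat.cast_zero]
      positivity
    · have hvpos : 0 < v i := lt_of_le_of_ne (hvnn i) (Ne.symm hvi)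
      set σ : ℝ := Real.sqrt (v i) with hσdef
      have hσpos : 0 < σ := Real.sqrt_pos.mpr hvpos
      have hσsq : σ ^ 2 = v i := Real.sq_sqrt (le_of_lt hvpos)
      set lam : ℝ := Real.sqrt (12 * L) with hlamdef
      have hlampos : 0 < lam := Real.sqrt_pos.mpr (by linarith)
      have hlamsq : lam ^ 2 = 12 * L := Real.sq_sqrt (by linarith)
      set t : ℝ := lam / σ with htdef
      have htpos : 0 < t := div_pos hlampos hσpos
      have hσne : σ ≠ 0 := ne_of_gt hσpos
      have ht2 : t ^ 2 * v i = lam ^ 2 := by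
        rw [htdef, div_pow, ← hσsq]
        field_simp
      set Y : (Fin n → Bool) → ℝ :=
        fun f => Real.exp (t * S i f) + Real.exp (-(t * S i f)) with hY
      have hYnn : ∀ f, 0 ≤ Y f := fun f => by
        have := Real.exp_pos (t * S i f)
        have := Real.exp_pos (-(t * S i f))
        simp only [hY]
        linarith
      have hBa : ∀ f ∈ Bi i, Real.exp (lam ^ 2) ≤ Y f := by
        intro f hf
        have hlt : 12 * L * v i < (S i f) ^ 2 := by
          rw [hBidef] at hf; exact (Finset.mem_filter.mp hf).2
        have hsq : (lam * σ) ^ 2 < (S i f) ^ 2 := by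
          rw [mul_pow, hlamsq, hσsq]; linarith
        have habs : lam * σ < |S i f| := by
          have h1 : (lam * σ) ^ 2 < |S i f| ^ 2 := by rwa [sq_abs]
          exact lt_of_pow_lt_pow_left₀ 2 (abs_nonneg _) h1
        have htls : t * (lam * σ) = lam ^ 2 := by
          rw [htdef]; field_simp
        rcases le_or_gt 0 (S i f) with hpos' | hneg'
        · have hlt2 : lam * σ < S i f := by rwa [abs_of_nonneg hpos'] at habs
          have h2 : lam ^ 2 < t * S i f := by
            rw [← htls]; exact (mul_lt_mul_iff_right₀ htpos).mpr hlt2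
          have h3 : Real.exp (lam ^ 2) ≤ Real.exp (t * S i f) :=
            Real.exp_le_exp.mpr (le_of_lt h2)
          have h4 := Real.exp_pos (-(t * S i f))
          simp only [hY]; linarith
        · have hlt2 : lam * σ < -(S i f) := by rwa [abs_of_neg hneg'] at habs
          have h2 : lam ^ 2 < -(t * S i f) := by
            rw [← htls, show -(t * S i f) = t * (-(S i f)) by ring]
            exact (mul_lt_mul_iff_right₀ htpos).mpr hlt2
          have h3 : Real.exp (lam ^ 2) ≤ Real.exp (-(t * S i f)) :=
            Real.exp_le_exp.mpr (le_of_lt h2)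
          have h4 := Real.exp_pos (t * S i f)
          simp only [hY]; linarith
      have hmark := markov_count Finset.univ (Bi i) Y (Real.exp (lam ^ 2))
        (fun f _ => hYnn f) (by rw [hBidef]; exact Finset.filter_subset _ _) hBa
      have e1 : ∑ f : Fin n → Bool, Real.exp (t * S i f)
          ≤ 2 ^ n * Real.exp (lam ^ 2 / 2) := by
        have h := sum_exp_le (fun j => A i j) t
        have hvv : (∑ j, (A i j) ^ 2) = v i := rfl
        rw [hvv, ht2] at h
        exact h
      have e2 : ∑ f : Fin n → Bool, Real.exp (-(t * S i f))
          ≤ 2 ^ n * Real.exp (lam ^ 2 / 2) := by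
        have h := sum_exp_le (fun j => A i j) (-t)
        have hvv : (∑ j, (A i j) ^ 2) = v i := rfl
        have hneg : (-t) ^ 2 = t ^ 2 := by ring
        rw [hvv, hneg, ht2] at h
        calc ∑ f : Fin n → Bool, Real.exp (-(t * S i f))
            = ∑ f : Fin n → Bool, Real.exp ((-t) * S i f) := by
              refine Finset.sum_congr rfl fun f _ => ?_
              rw [neg_mul]
          _ ≤ 2 ^ n * Real.exp (lam ^ 2 / 2) := h
      have hsumY : ∑ f : Fin n → Bool, Y f ≤ 2 * 2 ^ n * Real.exp (lam ^ 2 / 2) := by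
        calc ∑ f : Fin n → Bool, Y f
            = (∑ f : Fin n → Bool, Real.exp (t * S i f))
              + ∑ f : Fin n → Bool, Real.exp (-(t * S i f)) := by
              simp only [hY]; rw [Finset.sum_add_distrib]
          _ ≤ 2 ^ n * Real.exp (lam ^ 2 / 2) + 2 ^ n * Real.exp (lam ^ 2 / 2) :=
              add_le_add e1 e2
          _ = 2 * 2 ^ n * Real.exp (lam ^ 2 / 2) := by ring
      have hexp12 : Real.exp (lam ^ 2) = M ^ (12:ℕ) := by
        rw [hlamsq, hLdef, show (12:ℝ) * Real.log M = ((12:ℕ):ℝ) * Real.log M by norm_num,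
          Real.exp_nat_mul, Real.exp_log hM0]
      have hexp6 : Real.exp (lam ^ 2 / 2) = M ^ (6:ℕ) := by
        rw [hlamsq, hLdef, show (12:ℝ) * Real.log M / 2 = ((6:ℕ):ℝ) * Real.log M by push_cast; ring,
          Real.exp_nat_mul, Real.exp_log hM0]
      have hM6pos : (0:ℝ) < M ^ 6 := by positivity
      have h2 : M ^ 12 * ((Bi i).card : ℝ) ≤ 2 * 2 ^ n * M ^ 6 := by
        calc M ^ 12 * ((Bi i).card : ℝ) = Real.exp (lam ^ 2) * ((Bi i).card : ℝ) := by
              rw [hexp12]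
          _ ≤ ∑ f : Fin n → Bool, Y f := hmark
          _ ≤ 2 * 2 ^ n * Real.exp (lam ^ 2 / 2) := hsumY
          _ = 2 * 2 ^ n * M ^ 6 := by rw [hexp6]
      rw [le_div_iff₀ hM6pos]
      refine le_of_mul_le_mul_right ?_ hM6pos
      calc ((Bi i).card : ℝ) * M ^ 6 * M ^ 6 = M ^ 12 * ((Bi i).card : ℝ) := by ring
        _ ≤ 2 * 2 ^ n * M ^ 6 := h2
  -- combine the counts
  have hbadR : ((Finset.univ.filter (fun f => ¬ P f)).card : ℝ) < 2 ^ n := by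
    have hc1 : (Finset.univ.filter (fun f => ¬ P f)).card ≤ B0.card + ∑ i, (Bi i).card := by
      calc (Finset.univ.filter (fun f => ¬ P f)).card
          ≤ (B0 ∪ Finset.univ.biUnion Bi).card := Finset.card_le_card hsubset
        _ ≤ B0.card + (Finset.univ.biUnion Bi).card := Finset.card_union_le _ _
        _ ≤ B0.card + ∑ i, (Bi i).card := Nat.add_le_add_left Finset.card_biUnion_le _
    have hc2 : ((Finset.univ.filter (fun f => ¬ P f)).card : ℝ)
        ≤ (B0.card : ℝ) + ∑ i, ((Bi i).card : ℝ) := by exact_mod_cast hc1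
    have hsum : ∑ i : Fin m, ((Bi i).card : ℝ) ≤ M * (2 * 2 ^ n / M ^ 6) := by
      calc ∑ i : Fin m, ((Bi i).card : ℝ) ≤ ∑ _i : Fin m, (2 * 2 ^ n / M ^ 6) :=
            Finset.sum_le_sum fun i _ => hBi i
        _ = (m : ℝ) * (2 * 2 ^ n / M ^ 6) := by
            rw [Finset.sum_const, Finset.card_univ, Fintype.card_fin, nsmul_eq_mul]
        _ ≤ M * (2 * 2 ^ n / M ^ 6) := mul_le_mul_of_nonneg_right hmM (by positivity)
    have h2n : (0:ℝ) < 2 ^ n := by positivity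
    have h16 : (16:ℝ) ≤ M ^ 4 := by
      calc (16:ℝ) = 2 ^ 4 := by norm_num
        _ ≤ M ^ 4 := pow_le_pow_left₀ (by norm_num) h2M 4
    have hM5 : (0:ℝ) < M ^ 5 := by positivity
    have hcmp : 2 * (M + 1) < M ^ 5 := by
      nlinarith [mul_le_mul_of_nonneg_right h16 (le_of_lt hM0)]
    have hdl : 2 / M ^ 5 < 1 / (M + 1) := by
      rw [div_lt_div_iff₀ hM5 hMp1]; linarith
    have hsm : M / (M + 1) + 2 / M ^ 5 < 1 := by
      calc M / (M + 1) + 2 / M ^ 5 < M / (M + 1) + 1 / (M + 1) := by linarith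
        _ = 1 := by rw [← add_div, div_self (ne_of_gt hMp1)]
    have e : 2 ^ n * (M / (M + 1)) + M * (2 * 2 ^ n / M ^ 6)
        = 2 ^ n * (M / (M + 1) + 2 / M ^ 5) := by
      field_simp
    have hkey : 2 ^ n * (M / (M + 1)) + M * (2 * 2 ^ n / M ^ 6) < 2 ^ n := by
      rw [e]
      calc 2 ^ n * (M / (M + 1) + 2 / M ^ 5) < 2 ^ n * 1 := (mul_lt_mul_iff_right₀ h2n).mpr hsm
        _ = 2 ^ n := mul_one _
    linarith [hc2, hB0, hsum, hkey]
  have huniv : (Finset.univ : Finset (Fin n → Bool)).card = 2 ^ n := by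
    simp [Finset.card_univ]
  have hbadN : (Finset.univ.filter (fun f => ¬ P f)).card < 2 ^ n := by
    exact_mod_cast hbadR
  have hcards := Finset.card_filter_add_card_filter_not
    (s := (Finset.univ : Finset (Fin n → Bool))) (p := P)
  refine Finset.card_pos.mp ?_
  by_contra hc
  push_neg at hc
  have hc0 : (Finset.univ.filter P).card = 0 := Nat.le_zero.mp hc
  rw [hc0, zero_add, huniv] at hcards
  exact absurd hcards (ne_of_lt hbadN)
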